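/- Let f_1^{(n)}(ξ,τ) = f_2^{(n)}(ξ,τ) = δ_{ξ,n} χ_{[-1,1]}(τ − n²) and f_3^{(n)}(ξ,τ) = δ_{ξ,−2n} χ_{[-1,1]}(τ − 4n²) for n ∈ ℕ, with ξ ∈ ℤ, τ ∈ ℝ. Then the threefold convolution satisfies (f_1^{(n)} * f_2^{(n)} * f_3^{(n)})(ξ,τ) ≥ δ_{ξ,0} χ_{[-1,1]}(τ − 6n²). -/

import Mathlib

open MeasureTheory

/-- Threefold convolution on `ℤ × ℝ`. -/
noncomputable def conv3 (f g h : ℤ × ℝ → ℝ) : ℤ × ℝ → ℝ := fun p =>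
  ∑' ξ₁ : ℤ, ∑' ξ₂ : ℤ, ∫ τ₁ : ℝ, ∫ τ₂ : ℝ,
    f (ξ₁, τ₁) * g (ξ₂, τ₂) * h (p.1 - ξ₁ - ξ₂, p.2 - τ₁ - τ₂)

/-- `f₁^{(n)} = f₂^{(n)} = δ_{ξ,n} χ_{[-1,1]}(τ − n²)`. -/
noncomputable def f₁₂ (n : ℕ) : ℤ × ℝ → ℝ := fun p =>
  (if p.1 = (n : ℤ) then 1 else 0) *
    (if p.2 - (n : ℝ) ^ 2 ∈ Set.Icc (-1 : ℝ) 1 then 1 else 0)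

/-- `f₃^{(n)} = δ_{ξ,−2n} χ_{[-1,1]}(τ − 4n²)`. -/
noncomputable def f₃ (n : ℕ) : ℤ × ℝ → ℝ := fun p =>
  (if p.1 = -(2 * (n : ℤ)) then 1 else 0) *
    (if p.2 - 4 * (n : ℝ) ^ 2 ∈ Set.Icc (-1 : ℝ) 1 then 1 else 0)

lemma f₁₂_nonneg (n : ℕ) (p : ℤ × ℝ) : 0 ≤ f₁₂ n p := by
  unfold f₁₂; apply mul_nonneg <;> split_ifs <;> norm_num

lemma f₃_nonneg (n : ℕ) (p : ℤ × ℝ) : 0 ≤ f₃ n p := by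
  unfold f₃; apply mul_nonneg <;> split_ifs <;> norm_num

/-- Inner 1-d integral computed exactly. -/
lemma inner_integral (c b m : ℝ) :
    (∫ τ₂ : ℝ, c * ((if τ₂ - m ∈ Set.Icc (-1:ℝ) 1 then (1:ℝ) else 0)
        * (if b - τ₂ ∈ Set.Icc (-1:ℝ) 1 then (1:ℝ) else 0)))
      = c * max (min (m+1) (b+1) - max (m-1) (b-1)) 0 := by
  have h : (fun τ₂ : ℝ => c * ((if τ₂ - m ∈ Set.Icc (-1:ℝ) 1 then (1:ℝ) else 0)
        * (if b - τ₂ ∈ Set.Icc (-1:ℝ) 1 then (1:ℝ) else 0)))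
      = Set.indicator (Set.Icc (m-1) (m+1) ∩ Set.Icc (b-1) (b+1)) (fun _ => c) := by
    funext τ₂
    by_cases hmem : τ₂ ∈ Set.Icc (m-1) (m+1) ∩ Set.Icc (b-1) (b+1)
    · rw [Set.indicator_of_mem hmem]
      obtain ⟨hA, hB⟩ := hmem
      rw [Set.mem_Icc] at hA hB
      rw [if_pos (Set.mem_Icc.mpr ⟨by linarith [hA.1], by linarith [hA.2]⟩),
        if_pos (Set.mem_Icc.mpr ⟨by linarith [hB.2], by linarith [hB.1]⟩)]
      ring
    · rw [Set.indicator_of_notMem hmem]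
      by_cases hA : τ₂ - m ∈ Set.Icc (-1:ℝ) 1
      · by_cases hB : b - τ₂ ∈ Set.Icc (-1:ℝ) 1
        · exfalso
          rw [Set.mem_Icc] at hA hB
          exact hmem ⟨Set.mem_Icc.mpr ⟨by linarith [hA.1], by linarith [hA.2]⟩,
            Set.mem_Icc.mpr ⟨by linarith [hB.2], by linarith [hB.1]⟩⟩
        · rw [if_neg hB]; ring
      · rw [if_neg hA]; ring
  rw [h, integral_indicator_const c ((measurableSet_Icc).inter measurableSet_Icc),
    Set.Icc_inter_Icc, Real.volume_real_Icc, smul_eq_mul]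
  ring_nf

theorem trilinear_convolution_lower_bound (n : ℕ) (p : ℤ × ℝ) :
    (if p.1 = 0 then 1 else 0) *
        (if p.2 - 6 * (n : ℝ) ^ 2 ∈ Set.Icc (-1 : ℝ) 1 then (1 : ℝ) else 0) ≤
      conv3 (f₁₂ n) (f₁₂ n) (f₃ n) p := by
  have conv_nonneg : 0 ≤ conv3 (f₁₂ n) (f₁₂ n) (f₃ n) p := by
    refine tsum_nonneg fun ξ₁ => tsum_nonneg fun ξ₂ => integral_nonneg fun τ₁ =>
      integral_nonneg fun τ₂ => ?_
    exact mul_nonneg (mul_nonneg (f₁₂_nonneg _ _) (f₁₂_nonneg _ _)) (f₃_nonneg _ _)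
  by_cases hp1 : p.1 = 0
  · by_cases hp2 : p.2 - 6 * (n : ℝ) ^ 2 ∈ Set.Icc (-1 : ℝ) 1
    · -- main case
      rw [if_pos hp1, if_pos hp2, one_mul]
      obtain ⟨hs1, hs2⟩ := Set.mem_Icc.mp hp2
      -- reduce the tsums
      have h1 : conv3 (f₁₂ n) (f₁₂ n) (f₃ n) p
          = ∫ τ₁ : ℝ, ∫ τ₂ : ℝ, f₁₂ n ((n : ℤ), τ₁) * f₁₂ n ((n : ℤ), τ₂)
            * f₃ n (p.1 - n - n, p.2 - τ₁ - τ₂) := by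
        unfold conv3
        rw [tsum_eq_single (n : ℤ)]
        · rw [tsum_eq_single (n : ℤ)]
          intro ξ₂ hξ₂
          simp [f₁₂, hξ₂]
        · intro ξ₁ hξ₁
          have : ∀ ξ₂ : ℤ, (∫ τ₁ : ℝ, ∫ τ₂ : ℝ, f₁₂ n (ξ₁, τ₁) * f₁₂ n (ξ₂, τ₂)
              * f₃ n (p.1 - ξ₁ - ξ₂, p.2 - τ₁ - τ₂)) = 0 := by
            intro ξ₂; simp [f₁₂, hξ₁]
          simp [this]
      have h2n : p.1 - (n : ℤ) - (n : ℤ) = -(2 * (n : ℤ)) := by rw [hp1]; ring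
      have h2 : (∫ τ₁ : ℝ, ∫ τ₂ : ℝ, f₁₂ n ((n : ℤ), τ₁) * f₁₂ n ((n : ℤ), τ₂)
            * f₃ n (p.1 - n - n, p.2 - τ₁ - τ₂))
          = ∫ τ₁ : ℝ, (if τ₁ - (n : ℝ) ^ 2 ∈ Set.Icc (-1:ℝ) 1 then (1:ℝ) else 0)
              * max (min ((n : ℝ) ^ 2 + 1) ((p.2 - τ₁ - 4 * (n : ℝ) ^ 2) + 1)
                  - max ((n : ℝ) ^ 2 - 1) ((p.2 - τ₁ - 4 * (n : ℝ) ^ 2) - 1)) 0 := by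
        refine integral_congr_ae (Filter.Eventually.of_forall fun τ₁ => ?_)
        beta_reduce
        have hre : (∫ τ₂ : ℝ, f₁₂ n ((n : ℤ), τ₁) * f₁₂ n ((n : ℤ), τ₂)
              * f₃ n (p.1 - n - n, p.2 - τ₁ - τ₂))
            = ∫ τ₂ : ℝ, (if τ₁ - (n : ℝ) ^ 2 ∈ Set.Icc (-1:ℝ) 1 then (1:ℝ) else 0)
              * ((if τ₂ - (n : ℝ) ^ 2 ∈ Set.Icc (-1:ℝ) 1 then (1:ℝ) else 0)
                * (if (p.2 - τ₁ - 4 * (n : ℝ) ^ 2) - τ₂ ∈ Set.Icc (-1:ℝ) 1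
                    then (1:ℝ) else 0)) := by
          refine integral_congr_ae (Filter.Eventually.of_forall fun τ₂ => ?_)
          have harg : p.2 - τ₁ - τ₂ - 4 * (n : ℝ) ^ 2
              = (p.2 - τ₁ - 4 * (n : ℝ) ^ 2) - τ₂ := by ring
          simp only [f₁₂, f₃, h2n, harg, eq_self_iff_true, if_true, one_mul]
          ring
        rw [hre, inner_integral]
      rw [h1, h2]
      -- now the outer integral
      set φ : ℝ → ℝ := fun τ₁ =>
        max (min ((n : ℝ) ^ 2 + 1) ((p.2 - τ₁ - 4 * (n : ℝ) ^ 2) + 1)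
          - max ((n : ℝ) ^ 2 - 1) ((p.2 - τ₁ - 4 * (n : ℝ) ^ 2) - 1)) 0 with hφ
      have hc : Continuous fun τ₁ : ℝ => p.2 - τ₁ - 4 * (n : ℝ) ^ 2 :=
        (continuous_const.sub continuous_id).sub continuous_const
      have hφcont : Continuous φ :=
        ((continuous_const.min (hc.add continuous_const)).sub
          (continuous_const.max (hc.sub continuous_const))).max continuous_const
      have hφnn : ∀ x, 0 ≤ φ x := fun x => le_max_right _ _
      have hG : (fun τ₁ : ℝ => (if τ₁ - (n : ℝ) ^ 2 ∈ Set.Icc (-1:ℝ) 1 then (1:ℝ) else 0)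
            * φ τ₁)
          = Set.indicator (Set.Icc ((n : ℝ) ^ 2 - 1) ((n : ℝ) ^ 2 + 1)) φ := by
        funext τ₁
        by_cases hmem : τ₁ ∈ Set.Icc ((n : ℝ) ^ 2 - 1) ((n : ℝ) ^ 2 + 1)
        · rw [Set.indicator_of_mem hmem]
          rw [Set.mem_Icc] at hmem
          rw [if_pos (Set.mem_Icc.mpr ⟨by linarith [hmem.1], by linarith [hmem.2]⟩), one_mul]
        · rw [Set.indicator_of_notMem hmem, if_neg, zero_mul]
          intro hc
          rw [Set.mem_Icc] at hc
          exact hmem (Set.mem_Icc.mpr ⟨by linarith [hc.1], by linarith [hc.2]⟩)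
      have hGint : Integrable (fun τ₁ : ℝ =>
          (if τ₁ - (n : ℝ) ^ 2 ∈ Set.Icc (-1:ℝ) 1 then (1:ℝ) else 0) * φ τ₁) := by
        rw [hG]
        exact (hφcont.integrableOn_Icc).integrable_indicator measurableSet_Icc
      set s : ℝ := p.2 - 6 * (n : ℝ) ^ 2 with hsdef
      have hsmall : ∀ τ₁ : ℝ,
          Set.indicator (Set.Icc ((n : ℝ) ^ 2 + s/2 - 1/2) ((n : ℝ) ^ 2 + s/2 + 1/2))
              (fun _ => (1:ℝ)) τ₁
            ≤ (if τ₁ - (n : ℝ) ^ 2 ∈ Set.Icc (-1:ℝ) 1 then (1:ℝ) else 0) * φ τ₁ := by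
        intro τ₁
        by_cases h1 : τ₁ ∈ Set.Icc ((n : ℝ) ^ 2 + s/2 - 1/2) ((n : ℝ) ^ 2 + s/2 + 1/2)
        · rw [Set.indicator_of_mem h1]
          rw [Set.mem_Icc] at h1
          obtain ⟨a1, a2⟩ := h1
          rw [if_pos (Set.mem_Icc.mpr ⟨by linarith, by linarith⟩), one_mul, hφ]
          refine le_trans ?_ (le_max_left _ _)
          rcases le_total (p.2 - τ₁ - 4 * (n : ℝ) ^ 2) ((n : ℝ) ^ 2) with hc | hc
          · rw [min_eq_right (by linarith), max_eq_left (by linarith)]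
            have : (n : ℝ) ^ 2 ≤ p.2 - τ₁ - 4 * (n : ℝ) ^ 2 + 1 := by
              have : p.2 = 6 * (n : ℝ) ^ 2 + s := by rw [hsdef]; ring
              nlinarith
            linarith
          · rw [min_eq_left (by linarith), max_eq_right (by linarith)]
            have : p.2 - τ₁ - 4 * (n : ℝ) ^ 2 ≤ (n : ℝ) ^ 2 + 1 := by
              have : p.2 = 6 * (n : ℝ) ^ 2 + s := by rw [hsdef]; ring
              nlinarith
            linarith
        · rw [Set.indicator_of_notMem h1]
          exact mul_nonneg (by split_ifs <;> norm_num) (hφnn _)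
      have h0 : (1:ℝ) = ∫ τ₁ : ℝ,
          Set.indicator (Set.Icc ((n : ℝ) ^ 2 + s/2 - 1/2) ((n : ℝ) ^ 2 + s/2 + 1/2))
            (fun _ => (1:ℝ)) τ₁ := by
        rw [integral_indicator_const (1:ℝ) measurableSet_Icc, Real.volume_real_Icc,
          smul_eq_mul, mul_one]
        norm_num
      exact h0.le.trans (integral_mono_of_nonneg
        (Filter.Eventually.of_forall fun τ₁ =>
          Set.indicator_nonneg (fun _ _ => zero_le_one) τ₁)
        hGint (Filter.Eventually.of_forall hsmall))
    · rw [if_neg hp2, mul_zero]; exact conv_nonneg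
  · rw [if_neg hp1, zero_mul]; exact conv_nonneg
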